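/- arXiv:1907.04117 — 4 statements merged into one kernel-verified Lean document; each statement's English description precedes it below -/
import Mathlib

section
/- Let M be an m×m real matrix with nonnegative entries. Suppose for every x ∈ T and y ∈ T', |yᵀMx| ≤ α, where T := {x ∈ ((ε/√m)ℤ)^m : ‖x‖ ≤ 1, x ⟂ 1} and T' := {y ∈ ((ε/√m)ℤ)^m : ‖y‖ ≤ 1}, for some ε ∈ (0,1/3). Then for every z ∈ ℝ^m with ‖z‖ = 1 and z ⟂ 1, we have ‖Mz‖ ≤ (1 − 3ε)^{−1}·α. -/
open Finset

/-- 1-D rounding toward zero. -/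
lemma round_toward_zero (δ : ℝ) (hδ : 0 < δ) (t : ℝ) :
    ∃ k : ℤ, |(k : ℝ) * δ| ≤ |t| ∧ |(k : ℝ) * δ - t| ≤ δ := by
  rcases le_total 0 t with ht | ht
  · refine ⟨⌊t / δ⌋, ?_, ?_⟩
    · have h0 : (0:ℤ) ≤ ⌊t / δ⌋ := Int.floor_nonneg.2 (div_nonneg ht hδ.le)
      have h1 : (⌊t / δ⌋ : ℝ) * δ ≤ t := by
        have := Int.floor_le (t / δ)
        calc (⌊t / δ⌋ : ℝ) * δ ≤ (t / δ) * δ := by nlinarith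
        _ = t := div_mul_cancel₀ t hδ.ne'
      have h2 : (0:ℝ) ≤ (⌊t / δ⌋ : ℝ) * δ := by positivity
      rw [abs_of_nonneg h2, abs_of_nonneg ht]; exact h1
    · have h1 : (⌊t / δ⌋ : ℝ) * δ ≤ t := by
        have := Int.floor_le (t / δ)
        calc (⌊t / δ⌋ : ℝ) * δ ≤ (t / δ) * δ := by nlinarith
        _ = t := div_mul_cancel₀ t hδ.ne'
      have h2 : t - δ ≤ (⌊t / δ⌋ : ℝ) * δ := by
        have := Int.sub_one_lt_floor (t / δ)
        have : (t / δ - 1) * δ ≤ (⌊t / δ⌋ : ℝ) * δ := by nlinarith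
        calc t - δ = (t / δ - 1) * δ := by field_simp
        _ ≤ _ := this
      rw [abs_le]; constructor <;> linarith
  · obtain ⟨k, hk1, hk2⟩ : ∃ k : ℤ, |(k : ℝ) * δ| ≤ |(-t)| ∧ |(k : ℝ) * δ - (-t)| ≤ δ := by
      have ht' : 0 ≤ -t := by linarith
      refine ⟨⌊(-t) / δ⌋, ?_, ?_⟩
      · have h0 : (0:ℤ) ≤ ⌊(-t) / δ⌋ := Int.floor_nonneg.2 (div_nonneg ht' hδ.le)
        have h1 : (⌊(-t) / δ⌋ : ℝ) * δ ≤ -t := by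
          have := Int.floor_le ((-t) / δ)
          calc (⌊(-t) / δ⌋ : ℝ) * δ ≤ ((-t) / δ) * δ := by nlinarith
          _ = -t := div_mul_cancel₀ (-t) hδ.ne'
        have h2 : (0:ℝ) ≤ (⌊(-t) / δ⌋ : ℝ) * δ := by positivity
        rw [abs_of_nonneg h2, abs_of_nonneg ht']; exact h1
      · have h1 : (⌊(-t) / δ⌋ : ℝ) * δ ≤ -t := by
          have := Int.floor_le ((-t) / δ)
          calc (⌊(-t) / δ⌋ : ℝ) * δ ≤ ((-t) / δ) * δ := by nlinarith
          _ = -t := div_mul_cancel₀ (-t) hδ.ne'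
        have h2 : -t - δ ≤ (⌊(-t) / δ⌋ : ℝ) * δ := by
          have := Int.sub_one_lt_floor ((-t) / δ)
          have : ((-t) / δ - 1) * δ ≤ (⌊(-t) / δ⌋ : ℝ) * δ := by nlinarith
          calc -t - δ = ((-t) / δ - 1) * δ := by field_simp
          _ ≤ _ := this
        rw [abs_le]; constructor <;> linarith
    refine ⟨-k, ?_, ?_⟩
    · push_cast; rw [neg_mul, abs_neg]; rwa [abs_neg] at hk1
    · push_cast; rw [show (-(k:ℝ)) * δ - t = -((k:ℝ) * δ - (-t)) by ring, abs_neg]; exact hk2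

/-- Net for a vector with zero coordinate sum. -/
lemma lattice_net_sum_zero (m : ℕ) (δ : ℝ) (hδ : 0 < δ) (z : Fin m → ℝ)
    (hz : ∑ u, z u = 0) :
    ∃ x : Fin m → ℝ, (∀ u, ∃ k : ℤ, x u = (k : ℝ) * δ) ∧ (∑ u, x u = 0) ∧
      (∀ u, |x u - z u| ≤ δ) := by
  classical
  set g : Fin m → ℤ := fun u => ⌊z u / δ⌋ with hg
  have hle : ∀ u, ((g u : ℝ)) * δ ≤ z u := by
    intro u
    have := Int.floor_le (z u / δ)
    calc ((g u : ℝ)) * δ ≤ (z u / δ) * δ := by nlinarith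
    _ = z u := div_mul_cancel₀ _ hδ.ne'
  have hlt : ∀ u, z u < ((g u : ℝ) + 1) * δ := by
    intro u
    have := Int.lt_floor_add_one (z u / δ)
    have h2 : (z u / δ) * δ < ((g u : ℝ) + 1) * δ := by nlinarith
    calc z u = (z u / δ) * δ := (div_mul_cancel₀ _ hδ.ne').symm
    _ < _ := h2
  set D : ℤ := -∑ u, g u with hD
  have hsumg : (∑ u, (g u : ℝ)) * δ ≤ 0 := by
    calc (∑ u, (g u : ℝ)) * δ = ∑ u, (g u : ℝ) * δ := by rw [Finset.sum_mul]
    _ ≤ ∑ u, z u := Finset.sum_le_sum fun u _ => hle u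
    _ = 0 := hz
  have hD0 : 0 ≤ D := by
    have : (∑ u, (g u : ℝ)) ≤ 0 := by nlinarith
    have : ((∑ u, g u : ℤ) : ℝ) ≤ 0 := by push_cast; exact this
    have : (∑ u, g u : ℤ) ≤ 0 := by exact_mod_cast this
    omega
  have hDm : D ≤ m := by
    rcases Nat.eq_zero_or_pos m with hm | hm
    · subst hm
      simp [hD]
    · have hne : (Finset.univ : Finset (Fin m)).Nonempty :=
        ⟨⟨0, hm⟩, Finset.mem_univ _⟩
      have h1 : (0:ℝ) < ∑ u, ((g u : ℝ) + 1) * δ :=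
        hz ▸ Finset.sum_lt_sum_of_nonempty hne (fun u _ => hlt u)
      have h2 : ∑ u, ((g u : ℝ) + 1) * δ = ((∑ u, (g u : ℝ)) + m) * δ := by
        simp [add_mul, Finset.sum_add_distrib, Finset.sum_mul]
      have h3 : (0:ℝ) < (∑ u, (g u : ℝ)) + m := by nlinarith [h2 ▸ h1]
      have h4 : ((D:ℤ):ℝ) = -∑ u, (g u : ℝ) := by push_cast [hD]; ring
      have h5 : (D:ℝ) < m := by rw [h4]; linarith
      exact_mod_cast h5.le
  obtain ⟨A, -, hA⟩ := Finset.exists_subset_card_eq (s := (Finset.univ : Finset (Fin m))) (n := D.toNat)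
    (by simpa using (by omega : D.toNat ≤ m))
  refine ⟨fun u => ((g u : ℝ) + if u ∈ A then 1 else 0) * δ, ?_, ?_, ?_⟩
  · intro u
    by_cases hu : u ∈ A
    · exact ⟨g u + 1, by push_cast [hu]; ring⟩
    · exact ⟨g u, by push_cast [hu]; ring⟩
  · have hcard : ∑ u, (if u ∈ A then (1:ℝ) else 0) = (A.card : ℝ) := by
      rw [Finset.sum_ite_mem]
      simp
    have : ∑ u, ((g u : ℝ) + if u ∈ A then 1 else 0) = (∑ u, (g u : ℝ)) + D := by
      rw [Finset.sum_add_distrib, hcard, hA]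
      congr 1
      exact_mod_cast Int.toNat_of_nonneg hD0
    rw [← Finset.sum_mul, this]
    have : (∑ u, (g u : ℝ)) + D = 0 := by
      push_cast [hD]
      ring
    rw [this, zero_mul]
  · intro u
    have h1 := hle u
    have h2 := hlt u
    by_cases hu : u ∈ A <;> simp only [hu, if_true, if_false] <;> rw [abs_le] <;>
      constructor <;> nlinarith

/-- Net shrinking toward zero (no sum constraint). -/
lemma lattice_net_shrink (m : ℕ) (δ : ℝ) (hδ : 0 < δ) (w : Fin m → ℝ) :
    ∃ y : Fin m → ℝ, (∀ u, ∃ k : ℤ, y u = (k:ℝ) * δ) ∧ (∀ u, |y u| ≤ |w u|) ∧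
      (∀ u, |y u - w u| ≤ δ) := by
  choose k hk1 hk2 using fun u => round_toward_zero δ hδ (w u)
  exact ⟨fun u => (k u : ℝ) * δ, fun u => ⟨k u, rfl⟩, hk1, hk2⟩

noncomputable def toE (m : ℕ) : (Fin m → ℝ) ≃ₗ[ℝ] EuclideanSpace ℝ (Fin m) :=
  (WithLp.linearEquiv 2 ℝ (Fin m → ℝ)).symm

lemma toE_apply (m : ℕ) (v : Fin m → ℝ) (u : Fin m) : toE m v u = v u := rfl

lemma normE (m : ℕ) (v : Fin m → ℝ) :
    ‖toE m v‖ = Real.sqrt (∑ u, v u ^ 2) := by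
  rw [EuclideanSpace.norm_eq]
  simp [toE_apply, Real.norm_eq_abs, sq_abs]

lemma innerE (m : ℕ) (a b : Fin m → ℝ) :
    (inner ℝ (toE m a) (toE m b) : ℝ) = ∑ u, a u * b u := by
  rw [PiLp.inner_apply]
  simp [toE_apply, RCLike.inner_apply, mul_comm]

lemma normE_mono (m : ℕ) (a b : Fin m → ℝ) (hab : ∀ u, |a u| ≤ |b u|) :
    ‖toE m a‖ ≤ ‖toE m b‖ := by
  rw [normE, normE]
  apply Real.sqrt_le_sqrt
  apply Finset.sum_le_sum
  intro u _
  rw [← sq_abs (a u), ← sq_abs (b u)]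
  exact pow_le_pow_left₀ (abs_nonneg _) (hab u) 2

lemma normE_le_of_coord (m : ℕ) (v : Fin m → ℝ) (c : ℝ) (hc : 0 ≤ c)
    (hv : ∀ u, |v u| ≤ c) : ‖toE m v‖ ≤ Real.sqrt m * c := by
  rw [normE]
  have h1 : ∑ u, v u ^ 2 ≤ (m : ℝ) * c ^ 2 := by
    calc ∑ u, v u ^ 2 ≤ ∑ _u : Fin m, c ^ 2 := by
          apply Finset.sum_le_sum
          intro u _
          rw [← sq_abs (v u)]
          exact pow_le_pow_left₀ (abs_nonneg _) (hv u) 2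
    _ = (m : ℝ) * c ^ 2 := by simp [mul_comm]
  calc Real.sqrt (∑ u, v u ^ 2) ≤ Real.sqrt ((m : ℝ) * c ^ 2) := Real.sqrt_le_sqrt h1
  _ = Real.sqrt m * c := by
      rw [Real.sqrt_mul (Nat.cast_nonneg m), Real.sqrt_sq hc]

lemma continuous_coord (m : ℕ) (u : Fin m) :
    Continuous fun v : EuclideanSpace ℝ (Fin m) => v u :=
  (continuous_apply u).comp (PiLp.continuous_ofLp 2 fun _ : Fin m => ℝ)

set_option maxHeartbeats 1000000 in
/-- Discretization via an ε-net: if `|yᵀMx| ≤ α` on the lattice nets `T`, `T'`,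
then `‖Mz‖ ≤ (1 - 3ε)⁻¹ α` for all unit `z ⟂ 1`. -/
theorem stmt4 (m : ℕ) (M : Matrix (Fin m) (Fin m) ℝ) (hM : ∀ i j, 0 ≤ M i j)
    (ε α : ℝ) (hε : 0 < ε) (hε3 : ε < 1 / 3)
    (h : ∀ x y : Fin m → ℝ,
      (∀ u, ∃ k : ℤ, x u = k * (ε / Real.sqrt m)) →
      Real.sqrt (∑ u, (x u) ^ 2) ≤ 1 → (∑ u, x u) = 0 →
      (∀ u, ∃ k : ℤ, y u = k * (ε / Real.sqrt m)) →
      Real.sqrt (∑ u, (y u) ^ 2) ≤ 1 →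
      |∑ u, y u * M.mulVec x u| ≤ α) :
    ∀ z : Fin m → ℝ, Real.sqrt (∑ u, (z u) ^ 2) = 1 → (∑ u, z u) = 0 →
      Real.sqrt (∑ u, (M.mulVec z u) ^ 2) ≤ (1 - 3 * ε)⁻¹ * α := by
  intro z hz1 hz0
  classical
  rcases Nat.eq_zero_or_pos m with hm0 | hm
  · exfalso; subst hm0; simp at hz1
  have hm' : (0:ℝ) < Real.sqrt m := Real.sqrt_pos.2 (by exact_mod_cast hm)
  set δ : ℝ := ε / Real.sqrt m with hδdef
  have hδ : 0 < δ := div_pos hε hm'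
  have hδm : Real.sqrt m * δ = ε := by rw [hδdef, mul_comm]; exact div_mul_cancel₀ ε hm'.ne'
  have hα : 0 ≤ α := by
    have := h 0 0 (fun u => ⟨0, by simp⟩) (by simp) (by simp)
      (fun u => ⟨0, by simp⟩) (by simp)
    simpa using this
  have h3ε : 0 < 1 - 3 * ε := by linarith
  -- the compact set
  set K : Set (EuclideanSpace ℝ (Fin m)) := {v | ‖v‖ = 1 ∧ ∑ u, v u = 0} with hK
  have hKne : K.Nonempty :=
    ⟨toE m z, by rw [normE]; exact hz1, by simpa [toE_apply] using hz0⟩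
  have hKc : IsCompact K := by
    apply Metric.isCompact_of_isClosed_isBounded
    · have h1 : IsClosed {v : EuclideanSpace ℝ (Fin m) | ‖v‖ = 1} :=
        isClosed_eq continuous_norm continuous_const
      have h2 : IsClosed {v : EuclideanSpace ℝ (Fin m) | ∑ u, v u = 0} :=
        isClosed_eq (continuous_finset_sum _ fun u _ => continuous_coord m u)
          continuous_const
      exact h1.inter h2
    · apply Bornology.IsBounded.subset (Metric.isBounded_closedBall (x := (0:EuclideanSpace ℝ (Fin m))) (r := 1))
      intro v hv
      simp [Metric.mem_closedBall, hv.1.le, dist_eq_norm, hv.1]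
  -- the map and its continuity
  set Amap : EuclideanSpace ℝ (Fin m) → EuclideanSpace ℝ (Fin m) :=
    fun v => toE m (M.mulVec ((toE m).symm v)) with hAmap
  have hcont : Continuous fun v : EuclideanSpace ℝ (Fin m) => ‖Amap v‖ :=
    (((PiLp.continuous_toLp 2 fun _ : Fin m => ℝ).comp
      ((LinearMap.continuous_of_finiteDimensional M.mulVecLin).comp
      (PiLp.continuous_ofLp 2 fun _ : Fin m => ℝ)))).norm
  obtain ⟨z₀, hz₀K, hz₀max⟩ := hKc.exists_isMaxOn hKne hcont.continuousOn
  set z₀' : Fin m → ℝ := (toE m).symm z₀ with hz₀'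
  set S : ℝ := ‖toE m (M.mulVec z₀')‖ with hS
  have hS0 : 0 ≤ S := norm_nonneg _
  have hz₀norm : ‖toE m z₀'‖ = 1 := by
    rw [hz₀', LinearEquiv.apply_symm_apply]; exact hz₀K.1
  have hz₀sum : ∑ u, z₀' u = 0 := hz₀K.2
  -- operator-norm-style bound on the hyperplane
  have hop : ∀ v : Fin m → ℝ, (∑ u, v u = 0) →
      ‖toE m (M.mulVec v)‖ ≤ S * ‖toE m v‖ := by
    intro v hv
    rcases eq_or_ne v 0 with rfl | hv0
    · simp [Matrix.mulVec_zero, map_zero]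
    · have hcpos : 0 < ‖toE m v‖ := by
        rw [norm_pos_iff]
        exact (LinearEquiv.map_ne_zero_iff _).2 hv0
      set c : ℝ := ‖toE m v‖ with hc
      have hmem : toE m (c⁻¹ • v) ∈ K := by
        constructor
        · rw [map_smul, norm_smul, Real.norm_eq_abs,
            abs_of_nonneg (inv_nonneg.2 hcpos.le), ← hc, inv_mul_cancel₀ hcpos.ne']
        · show ∑ u, (toE m (c⁻¹ • v)) u = 0
          simp only [toE_apply, Pi.smul_apply, smul_eq_mul, ← Finset.mul_sum, hv, mul_zero]
      have hle := hz₀max hmem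
      simp only [hAmap, Set.mem_setOf_eq, LinearEquiv.symm_apply_apply] at hle
      have heq : ‖toE m (M.mulVec (c⁻¹ • v))‖ = c⁻¹ * ‖toE m (M.mulVec v)‖ := by
        rw [Matrix.mulVec_smul, map_smul, norm_smul, Real.norm_eq_abs,
          abs_of_nonneg (inv_nonneg.2 hcpos.le)]
      rw [heq] at hle
      have : c⁻¹ * ‖toE m (M.mulVec v)‖ ≤ S := hle
      calc ‖toE m (M.mulVec v)‖ = c * (c⁻¹ * ‖toE m (M.mulVec v)‖) := by
            field_simp
      _ ≤ c * S := by nlinarith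
      _ = S * c := mul_comm _ _
  -- key bound : (1 - 3ε) S ≤ α
  have hkey : (1 - 3 * ε) * S ≤ α := by
    rcases eq_or_lt_of_le hS0 with hS0' | hSpos
    · rw [← hS0', mul_zero]; exact hα
    · set w : Fin m → ℝ := S⁻¹ • (M.mulVec z₀') with hw
      have hw_norm : ‖toE m w‖ = 1 := by
        rw [hw, map_smul, norm_smul, Real.norm_eq_abs,
          abs_of_nonneg (inv_nonneg.2 hS0), ← hS, inv_mul_cancel₀ hSpos.ne']
      obtain ⟨y, hy_lat, hy_le, hy_err⟩ := lattice_net_shrink m δ hδ w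
      set z' : Fin m → ℝ := (1 - ε) • z₀' with hz'
      have hz'_sum : ∑ u, z' u = 0 := by
        simp only [hz', Pi.smul_apply, smul_eq_mul, ← Finset.mul_sum, hz₀sum, mul_zero]
      obtain ⟨x, hx_lat, hx_sum, hx_err⟩ := lattice_net_sum_zero m δ hδ z' hz'_sum
      have hxz' : ‖toE m x - toE m z'‖ ≤ ε := by
        rw [← map_sub]
        calc ‖toE m (x - z')‖ ≤ Real.sqrt m * δ :=
              normE_le_of_coord m _ δ hδ.le fun u => hx_err u
        _ = ε := hδm
      have hz'_norm : ‖toE m z'‖ = 1 - ε := by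
        rw [hz', map_smul, norm_smul, Real.norm_eq_abs, hz₀norm,
          abs_of_nonneg (by linarith : (0:ℝ) ≤ 1 - ε), mul_one]
      have hx_norm : ‖toE m x‖ ≤ 1 := by
        calc ‖toE m x‖ = ‖(toE m x - toE m z') + toE m z'‖ := by
              congr 1; abel
        _ ≤ ‖toE m x - toE m z'‖ + ‖toE m z'‖ := norm_add_le _ _
        _ ≤ ε + (1 - ε) := by rw [hz'_norm]; exact add_le_add hxz' le_rfl
        _ = 1 := by ring
      have hy_norm : ‖toE m y‖ ≤ 1 := by
        rw [← hw_norm]; exact normE_mono m y w hy_le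
      have hyw : ‖toE m y - toE m w‖ ≤ ε := by
        rw [← map_sub]
        calc ‖toE m (y - w)‖ ≤ Real.sqrt m * δ :=
              normE_le_of_coord m _ δ hδ.le fun u => hy_err u
        _ = ε := hδm
      have hαb : |∑ u, y u * M.mulVec x u| ≤ α :=
        h x y hx_lat (by rw [← normE]; exact hx_norm) hx_sum hy_lat
          (by rw [← normE]; exact hy_norm)
      -- now lower-bound the inner product
      have hxz₀ : ‖toE m (x - z₀')‖ ≤ 2 * ε := by
        have : toE m (x - z₀') = (toE m x - toE m z') + (toE m z' - toE m z₀') := by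
          rw [map_sub]; abel
        rw [this]
        have h2 : ‖toE m z' - toE m z₀'‖ = ε := by
          rw [← map_sub]
          have : z' - z₀' = (-ε) • z₀' := by
            rw [hz']; funext u; simp [Pi.smul_apply, smul_eq_mul]; ring
          rw [this, map_smul, norm_smul, Real.norm_eq_abs, hz₀norm,
            abs_of_nonpos (by linarith : -ε ≤ 0), mul_one, neg_neg]
        calc ‖(toE m x - toE m z') + (toE m z' - toE m z₀')‖
            ≤ ‖toE m x - toE m z'‖ + ‖toE m z' - toE m z₀'‖ := norm_add_le _ _
        _ ≤ ε + ε := by rw [h2]; exact add_le_add hxz' le_rfl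
        _ = 2 * ε := by ring
      have hMxz : ‖toE m (M.mulVec (x - z₀'))‖ ≤ S * (2 * ε) := by
        have hsum : ∑ u, (x - z₀') u = 0 := by
          simp [Finset.sum_sub_distrib, hx_sum, hz₀sum]
        calc ‖toE m (M.mulVec (x - z₀'))‖ ≤ S * ‖toE m (x - z₀')‖ := hop _ hsum
        _ ≤ S * (2 * ε) := by nlinarith
      have t1 : (inner ℝ (toE m w) (toE m (M.mulVec z₀')) : ℝ) = S := by
        rw [hw, map_smul, real_inner_smul_left, real_inner_self_eq_norm_sq, ← hS,
          sq, ← mul_assoc, inv_mul_cancel₀ hSpos.ne', one_mul]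
      have t2 : |(inner ℝ (toE m y - toE m w) (toE m (M.mulVec z₀')) : ℝ)| ≤ ε * S := by
        calc |(inner ℝ (toE m y - toE m w) (toE m (M.mulVec z₀')) : ℝ)|
            ≤ ‖toE m y - toE m w‖ * ‖toE m (M.mulVec z₀')‖ := abs_real_inner_le_norm _ _
        _ ≤ ε * S := by rw [← hS]; exact mul_le_mul_of_nonneg_right hyw hS0
      have t3 : |(inner ℝ (toE m y) (toE m (M.mulVec (x - z₀'))) : ℝ)| ≤ S * (2 * ε) := by
        calc |(inner ℝ (toE m y) (toE m (M.mulVec (x - z₀'))) : ℝ)|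
            ≤ ‖toE m y‖ * ‖toE m (M.mulVec (x - z₀'))‖ := abs_real_inner_le_norm _ _
        _ ≤ 1 * (S * (2 * ε)) := by
            apply mul_le_mul hy_norm hMxz (norm_nonneg _) (by norm_num)
        _ = S * (2 * ε) := one_mul _
      have hdecomp : ∑ u, y u * M.mulVec x u =
          (inner ℝ (toE m w) (toE m (M.mulVec z₀')) : ℝ)
          + (inner ℝ (toE m y - toE m w) (toE m (M.mulVec z₀')) : ℝ)
          + (inner ℝ (toE m y) (toE m (M.mulVec (x - z₀'))) : ℝ) := by
        rw [← innerE m y (M.mulVec x)]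
        rw [← map_sub, innerE, innerE, innerE, innerE]
        have hsub : M.mulVec (x - z₀') = M.mulVec x - M.mulVec z₀' := Matrix.mulVec_sub _ _ _
        rw [hsub]
        simp only [Pi.sub_apply, sub_mul, mul_sub]
        rw [Finset.sum_sub_distrib, Finset.sum_sub_distrib]
        ring
      have hlow : (1 - 3 * ε) * S ≤ ∑ u, y u * M.mulVec x u := by
        rw [hdecomp, t1]
        have h2 := abs_le.1 t2
        have h3 := abs_le.1 t3
        nlinarith
      calc (1 - 3 * ε) * S ≤ ∑ u, y u * M.mulVec x u := hlow
      _ ≤ |∑ u, y u * M.mulVec x u| := le_abs_self _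
      _ ≤ α := hαb
  -- conclude
  have hz_norm : ‖toE m z‖ = 1 := by rw [normE]; exact hz1
  calc Real.sqrt (∑ u, (M.mulVec z u) ^ 2) = ‖toE m (M.mulVec z)‖ := (normE m _).symm
  _ ≤ S * ‖toE m z‖ := hop z hz0
  _ = S := by rw [hz_norm, mul_one]
  _ ≤ (1 - 3 * ε)⁻¹ * α := by
      rw [inv_mul_eq_div, le_div_iff₀ h3ε]
      linarith [hkey]
end

section
/- Let M be a random m×m 0/1 matrix where each column independently contains exactly t ones in uniformly random positions (t ≤ √m, so in particular t ≤ m/2). Then for any set A of rows, set B of columns, and any set J ⊆ A×B of possible incidences, the probability that the set of incidences between A and B equals exactly J is at most (2t/m)^{|J|}. -/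
open Finset

lemma aux1 (m t : ℕ) (hm : 2*t ≤ m) : ∀ k, k ≤ t →
    m.choose (t - k) * m ^ k ≤ m.choose t * (2*t) ^ k := by
  intro k
  induction k with
  | zero => simp
  | succ k ih =>
    intro hk
    have ih' := ih (by omega)
    have h1 : m.choose (t - k) * (t - k) = m.choose (t - k - 1) * (m - (t - k - 1)) := by
      have := Nat.choose_succ_right_eq m (t - k - 1)
      have e : t - k - 1 + 1 = t - k := by omega
      rw [e] at this
      exact this
    have h2 : m ≤ 2 * (m - (t - k - 1)) := by omega
    have key : m.choose (t - (k+1)) * m ≤ 2 * t * m.choose (t - k) := by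
      have e : t - (k+1) = t - k - 1 := by omega
      rw [e]
      calc m.choose (t-k-1) * m ≤ m.choose (t-k-1) * (2 * (m - (t-k-1))) :=
            Nat.mul_le_mul_left _ h2
        _ = 2 * (m.choose (t-k-1) * (m - (t-k-1))) := by ring
        _ = 2 * (m.choose (t-k) * (t-k)) := by rw [h1]
        _ ≤ 2 * (m.choose (t-k) * t) := by
            exact Nat.mul_le_mul_left _ (Nat.mul_le_mul_left _ (by omega))
        _ = 2 * t * m.choose (t-k) := by ring
    calc m.choose (t-(k+1)) * m ^ (k+1) = (m.choose (t-(k+1)) * m) * m ^ k := by ring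
      _ ≤ (2 * t * m.choose (t-k)) * m ^ k := Nat.mul_le_mul_right _ key
      _ = 2 * t * (m.choose (t-k) * m ^ k) := by ring
      _ ≤ 2 * t * (m.choose t * (2*t) ^ k) := Nat.mul_le_mul_left _ ih'
      _ = m.choose t * (2*t) ^ (k+1) := by ring

lemma aux2 (m t k : ℕ) (hk : k ≤ t) (hm : 2*t ≤ m) (ht : 0 < t) :
    (m.choose (t-k) : ℝ) ≤ m.choose t * (2*t/m) ^ k := by
  have hm0 : 0 < m := by omega
  have h := aux1 m t hm k hk
  have h' : (m.choose (t-k) : ℝ) * m ^ k ≤ m.choose t * (2*t) ^ k := by exact_mod_cast h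
  rw [div_pow, mul_div_assoc'] at *
  rw [le_div_iff₀ (by positivity)]
  push_cast
  convert h' using 2 <;> ring

/-- In the random model where each column independently contains exactly `t` ones in
uniformly random positions, for sets `A` of rows and `B` of columns and any
`J ⊆ A × B`, the probability that the incidences between `A` and `B` are exactly `J`
is at most `(2t/m)^{|J|}`. -/
theorem stmt8 (m t : ℕ) (ht : 0 < t) (htm : 2 * t ^ 2 ≤ m)
    (A B : Finset (Fin m)) (J : Finset (Fin m × Fin m)) (hJ : J ⊆ A ×ˢ B) :
    (Nat.card {ω : Fin m → {s : Finset (Fin m) // s.card = t} //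
        ∀ p ∈ A ×ˢ B, (p ∈ J ↔ p.1 ∈ (ω p.2).1)} : ℝ)
      / (Nat.card (Fin m → {s : Finset (Fin m) // s.card = t}) : ℝ)
      ≤ (2 * (t : ℝ) / m) ^ J.card := by
  classical
  have htm' : 2 * t ≤ m := by nlinarith
  have htm2 : t ≤ m := by omega
  have hm0 : 0 < m := by omega
  set S := {s : Finset (Fin m) // s.card = t} with hS
  set N := m.choose t with hN
  have hNpos : 0 < N := Nat.choose_pos htm2
  have hcardS : Nat.card S = N := by
    rw [Nat.card_eq_fintype_card, Fintype.card_finset_len, Fintype.card_fin]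
  -- total count
  have htotal : Nat.card (Fin m → S) = N ^ m := by
    rw [Nat.card_eq_fintype_card, Fintype.card_fun, Fintype.card_fin,
      ← Nat.card_eq_fintype_card, hcardS]
  -- per-column predicate
  set Q : Fin m → Finset (Fin m) → Prop :=
    fun j u => ∀ i : Fin m, (i, j) ∈ A ×ˢ B → ((i, j) ∈ J ↔ i ∈ u) with hQ
  -- event count as product
  have hevent : Nat.card {ω : Fin m → S //
      ∀ p ∈ A ×ˢ B, (p ∈ J ↔ p.1 ∈ (ω p.2).1)}
      = ∏ j : Fin m, Nat.card {s : S // Q j s.1} := by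
    rw [← Nat.card_pi]
    apply Nat.card_congr
    refine (Equiv.subtypeEquivRight ?_).trans (Equiv.subtypePiEquivPi)
    intro ω
    constructor
    · intro h j i hij; exact h (i, j) hij
    · intro h p hp; exact h p.2 p.1 hp
  set k : Fin m → ℕ := fun j => (J.filter fun p => p.2 = j).card with hk
  have hsum : ∑ j : Fin m, k j = J.card := by
    exact (Finset.card_eq_sum_card_fiberwise (f := Prod.snd) (t := univ)
      (fun x _ => mem_univ _)).symm
  -- per-column bound
  have key : ∀ j : Fin m, (Nat.card {s : S // Q j s.1} : ℝ)
      ≤ (N : ℝ) * (2 * (t:ℝ) / m) ^ (k j) := by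
    intro j
    have hcard : Nat.card {s : S // Q j s.1}
        = (univ.filter fun u : Finset (Fin m) => u.card = t ∧ Q j u).card := by
      rw [Nat.card_congr (Equiv.subtypeSubtypeEquivSubtypeInter _ _),
        Nat.card_eq_fintype_card, Fintype.card_subtype]
    rw [hcard]
    set F := univ.filter fun u : Finset (Fin m) => u.card = t ∧ Q j u with hF
    set D := A.filter fun i => (i, j) ∈ J with hD
    have himg : J.filter (fun p => p.2 = j) = D.image (fun i => (i, j)) := by
      ext p
      obtain ⟨a, b⟩ := p
      simp only [mem_filter, mem_image, hD]
      constructor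
      · rintro ⟨hpJ, hpj⟩
        subst hpj
        exact ⟨a, ⟨(mem_product.mp (hJ hpJ)).1, hpJ⟩, rfl⟩
      · rintro ⟨i, ⟨hiA, hiJ⟩, he⟩
        obtain ⟨h1, h2⟩ := Prod.mk.injEq .. ▸ he
        subst h1; subst h2
        exact ⟨hiJ, rfl⟩
    have hDcard : D.card = k j := by
      rw [hk]
      dsimp only
      rw [himg, card_image_of_injective _ (fun a b hab => by simpa using hab)]
    have hDsub : ∀ u ∈ F, D ⊆ u := by
      intro u hu i hi
      simp only [hF, mem_filter] at hu
      simp only [hD, mem_filter] at hi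
      exact (hu.2.2 i (hJ hi.2)).mp hi.2
    rcases F.eq_empty_or_nonempty with hFe | ⟨u₀, hu₀⟩
    · rw [hFe]
      simp only [card_empty, Nat.cast_zero]
      positivity
    · have hkt : k j ≤ t := by
        have h1 := Finset.card_le_card (hDsub u₀ hu₀)
        have h2 : u₀.card = t := by
          simp only [hF, mem_filter] at hu₀; exact hu₀.2.1
        rw [hDcard, h2] at h1; exact h1
      have hFle : F.card ≤ m.choose (t - k j) := by
        have h := Finset.card_le_card_of_injOn (s := F)
          (t := (univ : Finset (Fin m)).powersetCard (t - k j)) (fun u => u \ D) ?_ ?_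
        · simpa using h
        · intro u hu
          rw [Finset.mem_coe, mem_powersetCard]
          refine ⟨subset_univ _, ?_⟩
          rw [card_sdiff_of_subset (hDsub u hu), hDcard]
          simp only [hF, Finset.mem_coe, mem_filter] at hu
          rw [hu.2.1]
        · intro u₁ h₁ u₂ h₂ h
          have e1 := Finset.sdiff_union_of_subset (hDsub u₁ h₁)
          have e2 := Finset.sdiff_union_of_subset (hDsub u₂ h₂)
          simp only at h
          rw [← e1, ← e2, h]
      calc (F.card : ℝ) ≤ (m.choose (t - k j) : ℝ) := by exact_mod_cast hFle
        _ ≤ (N : ℝ) * (2 * (t:ℝ) / m) ^ (k j) := by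
            have := aux2 m t (k j) hkt htm' ht
            convert this using 3 <;> push_cast <;> ring
  -- assemble
  rw [hevent, htotal]
  have hNm : (0:ℝ) < (N:ℝ) ^ m := by positivity
  push_cast
  rw [div_le_iff₀ hNm]
  calc (∏ j : Fin m, (Nat.card {s : S // Q j s.1} : ℝ))
      ≤ ∏ j : Fin m, (N : ℝ) * (2 * (t:ℝ) / m) ^ (k j) := by
        apply Finset.prod_le_prod (fun j _ => by positivity) (fun j _ => key j)
    _ = (N : ℝ) ^ m * (2 * (t:ℝ) / m) ^ (∑ j : Fin m, k j) := by
        rw [Finset.prod_mul_distrib, Finset.prod_const, Finset.card_univ,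
          Fintype.card_fin, Finset.prod_pow_eq_pow_sum]
    _ = (2 * (t:ℝ) / m) ^ J.card * (N : ℝ) ^ m := by rw [hsum]; ring
end

section
/- Let X₀, X₁, …, X_n be a martingale with respect to Z₀, …, Z_n satisfying the C-bounded difference property |X_{i+1} − X_i| ≤ C, and with variance parameter σ² = Σ_{i=0}^{n−1} sup_{(Z₁,…,Zᵢ)} E[(X_{i+1} − Xᵢ)² | Z₁,…,Zᵢ]. Then for any λ > 0, P(|X_n − X₀| ≥ λ) ≤ 2·exp(−λ²/(2(σ² + Cλ/3))). -/
open MeasureTheory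

open Finset

lemma fact_ge (n : ℕ) : 2 * 3 ^ n ≤ (n + 2).factorial := by
  induction n with
  | zero => simp [Nat.factorial]
  | succ k ih =>
    have h : (k + 1 + 2).factorial = (k + 3) * (k + 2).factorial := rfl
    calc 2 * 3 ^ (k + 1) = 3 * (2 * 3 ^ k) := by ring
    _ ≤ 3 * (k + 2).factorial := Nat.mul_le_mul_left 3 ih
    _ ≤ (k + 3) * (k + 2).factorial := Nat.mul_le_mul_right _ (by omega)
    _ = (k + 1 + 2).factorial := h.symm

lemma exp_le_quad {u y : ℝ} (hu0 : 0 ≤ u) (hu3 : u < 3) (hy : |y| ≤ u) :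
    Real.exp y ≤ 1 + y + y ^ 2 * (1 / (2 * (1 - u / 3))) := by
  have hden : 0 < 1 - u / 3 := by linarith
  have hsum : Summable (fun n : ℕ => y ^ n / n.factorial) :=
    Real.summable_pow_div_factorial y
  have hexp : Real.exp y = ∑' n : ℕ, y ^ n / n.factorial := by
    rw [Real.exp_eq_exp_ℝ, NormedSpace.exp_eq_tsum_div]
  have hsplit := Summable.sum_add_tsum_nat_add 2 hsum
  have hrange : ∑ i ∈ range 2, y ^ i / i.factorial = 1 + y := by
    simp [Finset.sum_range_succ, Nat.factorial]
  have hgeo : Summable (fun n : ℕ => y ^ 2 / 2 * (u / 3) ^ n) := by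
    refine Summable.mul_left _ (summable_geometric_of_lt_one (by linarith) (by linarith))
  have hshift : Summable (fun n : ℕ => y ^ (n + 2) / (n + 2).factorial) :=
    (summable_nat_add_iff 2).2 hsum
  have hterm : ∀ n : ℕ, y ^ (n + 2) / (n + 2).factorial ≤ y ^ 2 / 2 * (u / 3) ^ n := by
    intro n
    have h1 : y ^ (n + 2) ≤ y ^ 2 * u ^ n := by
      calc y ^ (n + 2) ≤ |y ^ (n + 2)| := le_abs_self _
      _ = |y| ^ 2 * |y| ^ n := by rw [abs_pow]; ring
      _ ≤ y ^ 2 * u ^ n := by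
          rw [sq_abs]
          exact mul_le_mul_of_nonneg_left (pow_le_pow_left₀ (abs_nonneg y) hy n) (sq_nonneg y)
    have h2 : (2 * 3 ^ n : ℝ) ≤ (n + 2).factorial := by
      exact_mod_cast fact_ge n
    have hfac : (0:ℝ) < (n + 2).factorial := by positivity
    have h3 : y ^ (n + 2) / (n + 2).factorial ≤ (y ^ 2 * u ^ n) / (2 * 3 ^ n) := by
      rcases le_or_gt (y ^ (n+2)) 0 with hneg | hpos
      · have : y ^ (n + 2) / (n + 2).factorial ≤ 0 := div_nonpos_of_nonpos_of_nonneg hneg hfac.le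
        exact this.trans (by positivity)
      · calc y ^ (n + 2) / (n + 2).factorial ≤ y ^ (n + 2) / (2 * 3 ^ n) :=
              div_le_div_of_nonneg_left hpos.le (by positivity) h2
        _ ≤ (y ^ 2 * u ^ n) / (2 * 3 ^ n) :=
            div_le_div_of_nonneg_right h1 (by positivity)
    calc y ^ (n + 2) / (n + 2).factorial ≤ (y ^ 2 * u ^ n) / (2 * 3 ^ n) := h3
    _ = y ^ 2 / 2 * (u / 3) ^ n := by rw [div_pow]; ring
  have htail : ∑' n : ℕ, y ^ (n + 2) / (n + 2).factorial
      ≤ y ^ 2 * (1 / (2 * (1 - u / 3))) := by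
    calc ∑' n : ℕ, y ^ (n + 2) / (n + 2).factorial
        ≤ ∑' n : ℕ, y ^ 2 / 2 * (u / 3) ^ n := Summable.tsum_le_tsum hterm hshift hgeo
    _ = y ^ 2 / 2 * (1 - u / 3)⁻¹ := by
        rw [tsum_mul_left, tsum_geometric_of_lt_one (by linarith) (by linarith)]
    _ = y ^ 2 * (1 / (2 * (1 - u / 3))) := by field_simp
  have : Real.exp y = 1 + y + ∑' n : ℕ, y ^ (n + 2) / (n + 2).factorial := by
    rw [hexp, ← hsplit, hrange]
  linarith [htail, this.le, this.ge]

lemma one_sided {Ω : Type*} {m0 : MeasurableSpace Ω} (μ : Measure Ω)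
    [IsProbabilityMeasure μ] (ℱ : Filtration ℕ m0) (X : ℕ → Ω → ℝ)
    (hX : Martingale X ℱ μ) (n : ℕ) (C : ℝ) (hC : 0 < C)
    (hbdd : ∀ i, ∀ᵐ ω ∂μ, |X (i + 1) ω - X i ω| ≤ C)
    (v : ℕ → ℝ)
    (hv : ∀ i, ∀ᵐ ω ∂μ, (μ[fun ω' => (X (i + 1) ω' - X i ω') ^ 2 | ℱ i]) ω ≤ v i)
    (σ2 : ℝ) (hσ : σ2 = ∑ i ∈ Finset.range n, v i)
    (lam t : ℝ) (hlam : 0 < lam) (ht : 0 < t) (htC : t * C < 3) :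
    μ {ω | lam ≤ X n ω - X 0 ω}
      ≤ ENNReal.ofReal
          (Real.exp (-(t * lam) + t ^ 2 * σ2 * (1 / (2 * (1 - t * C / 3))))) := by
  set K : ℝ := 1 / (2 * (1 - t * C / 3)) with hKdef
  have hden : 0 < 1 - t * C / 3 := by linarith
  have hK : 0 < K := by positivity
  set G : ℕ → Ω → ℝ := fun k ω => Real.exp (t * (X k ω - X 0 ω)) with hGdef
  -- strong measurability of G k w.r.t. ℱ k
  have hGsm : ∀ k, StronglyMeasurable[ℱ k] (G k) := by
    intro k
    exact Real.continuous_exp.comp_stronglyMeasurable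
      (stronglyMeasurable_const.mul
        ((hX.stronglyAdapted k).sub ((hX.stronglyAdapted 0).mono (ℱ.mono (Nat.zero_le k)))))
  -- a.e. bound on |X k - X 0|
  have habs : ∀ k, ∀ᵐ ω ∂μ, |X k ω - X 0 ω| ≤ k * C := by
    intro k
    induction k with
    | zero => filter_upwards with ω; simp
    | succ k ih =>
      filter_upwards [hbdd k, ih] with ω h1 h2
      have h3 := abs_sub_le (X (k + 1) ω) (X k ω) (X 0 ω)
      push_cast
      linarith
  -- integrability of G k
  have hGint : ∀ k, Integrable (G k) μ := by
    intro k
    refine Integrable.mono' (integrable_const (Real.exp (t * (k * C))))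
      ((hGsm k).mono (ℱ.le k)).aestronglyMeasurable ?_
    filter_upwards [habs k] with ω h
    rw [hGdef, Real.norm_eq_abs, Real.abs_exp]
    exact Real.exp_le_exp.2
      (mul_le_mul_of_nonneg_left ((le_abs_self _).trans h) ht.le)
  -- conditional mgf bound for each increment
  have hcond : ∀ k, (μ[fun ω => Real.exp (t * (X (k + 1) ω - X k ω)) | ℱ k])
      ≤ᵐ[μ] fun _ => Real.exp (t ^ 2 * K * v k) := by
    intro k
    set D : Ω → ℝ := fun ω => X (k + 1) ω - X k ω with hDdef
    have hDint : Integrable D μ := (hX.integrable (k + 1)).sub (hX.integrable k)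
    have hD2meas : AEStronglyMeasurable (fun ω => D ω ^ 2) μ := by
      refine (hDint.aestronglyMeasurable.mul hDint.aestronglyMeasurable).congr ?_
      filter_upwards with ω; simp [sq]
    have hD2int : Integrable (fun ω => D ω ^ 2) μ := by
      refine Integrable.mono' (integrable_const (C ^ 2)) hD2meas ?_
      filter_upwards [hbdd k] with ω h
      rw [Real.norm_eq_abs, abs_pow, ← sq_abs]
      exact pow_le_pow_left₀ (abs_nonneg _) (by rwa [abs_abs]) 2
    have hgint : Integrable (fun ω => Real.exp (t * D ω)) μ := by
      refine Integrable.mono' (integrable_const (Real.exp (t * C)))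
        ((Real.continuous_exp.comp_stronglyMeasurable
          (stronglyMeasurable_const.mul
            (((hX.stronglyMeasurable (k+1)).mono (ℱ.le (k+1))).sub
              ((hX.stronglyMeasurable k).mono (ℱ.le k))))).aestronglyMeasurable) ?_
      filter_upwards [hbdd k] with ω h
      rw [Real.norm_eq_abs, Real.abs_exp]
      exact Real.exp_le_exp.2
        (mul_le_mul_of_nonneg_left ((le_abs_self _).trans h) ht.le)
    have hgle : ∀ᵐ ω ∂μ,
        Real.exp (t * D ω) ≤ 1 + t * D ω + t ^ 2 * K * D ω ^ 2 := by
      filter_upwards [hbdd k] with ω h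
      have h1 : |t * D ω| ≤ t * C := by
        rw [abs_mul, abs_of_pos ht]
        exact mul_le_mul_of_nonneg_left h ht.le
      calc Real.exp (t * D ω) ≤ 1 + t * D ω + (t * D ω) ^ 2 * K :=
            exp_le_quad (by positivity) htC h1
      _ = 1 + t * D ω + t ^ 2 * K * D ω ^ 2 := by ring
    have hRHSint : Integrable (fun ω => 1 + t * D ω + t ^ 2 * K * D ω ^ 2) μ :=
      ((integrable_const (1 : ℝ)).add (hDint.const_mul t)).add
        (hD2int.const_mul (t ^ 2 * K))
    have hcondD : μ[D | ℱ k] =ᵐ[μ] fun _ => (0 : ℝ) := by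
      have h1 : μ[D | ℱ k] =ᵐ[μ] μ[X (k + 1) | ℱ k] - μ[X k | ℱ k] :=
        condExp_sub (hX.integrable (k + 1)) (hX.integrable k) (ℱ k)
      have h2 := hX.condExp_ae_eq (Nat.le_succ k)
      have h3 := hX.condExp_ae_eq (le_refl k)
      filter_upwards [h1, h2, h3] with ω e1 e2 e3
      simp only [Pi.sub_apply] at e1
      simp [e1, e2, e3]
    have hce : μ[fun ω => 1 + t * D ω + t ^ 2 * K * D ω ^ 2 | ℱ k]
        ≤ᵐ[μ] fun _ => 1 + t ^ 2 * K * v k := by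
      have e1 : μ[fun ω => 1 + t * D ω + t ^ 2 * K * D ω ^ 2 | ℱ k]
          =ᵐ[μ] μ[fun ω => 1 + t * D ω | ℱ k]
            + μ[fun ω => t ^ 2 * K * D ω ^ 2 | ℱ k] :=
        condExp_add ((integrable_const (1 : ℝ)).add (hDint.const_mul t))
          (hD2int.const_mul (t ^ 2 * K)) (ℱ k)
      have e2 : μ[fun ω => 1 + t * D ω | ℱ k]
          =ᵐ[μ] μ[fun _ => (1 : ℝ) | ℱ k] + μ[fun ω => t * D ω | ℱ k] :=
        condExp_add (integrable_const (1 : ℝ)) (hDint.const_mul t) (ℱ k)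
      have e3 : μ[fun _ => (1 : ℝ) | ℱ k] = fun _ => (1 : ℝ) := condExp_const (ℱ.le k) 1
      have e4 : μ[fun ω => t * D ω | ℱ k] =ᵐ[μ] fun ω => t * (μ[D | ℱ k]) ω := by
        exact condExp_smul (μ := μ) t D (ℱ k)
      have e5 : μ[fun ω => t ^ 2 * K * D ω ^ 2 | ℱ k]
          =ᵐ[μ] fun ω => t ^ 2 * K * (μ[fun ω' => D ω' ^ 2 | ℱ k]) ω := by
        exact
          condExp_smul (μ := μ) (t ^ 2 * K) (fun ω => D ω ^ 2) (ℱ k)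
      filter_upwards [e1, e2, e4, e5, hcondD, hv k] with ω w1 w2 w4 w5 wD wv
      simp only [Pi.add_apply] at w1 w2
      rw [w1, w2, e3, w4, w5, wD]
      simp only
      have : t ^ 2 * K * (μ[fun ω' => D ω' ^ 2 | ℱ k]) ω ≤ t ^ 2 * K * v k :=
        mul_le_mul_of_nonneg_left wv (by positivity)
      linarith
    calc μ[fun ω => Real.exp (t * D ω) | ℱ k]
        ≤ᵐ[μ] μ[fun ω => 1 + t * D ω + t ^ 2 * K * D ω ^ 2 | ℱ k] :=
          condExp_mono hgint hRHSint hgle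
    _ ≤ᵐ[μ] fun _ => 1 + t ^ 2 * K * v k := hce
    _ ≤ᵐ[μ] fun _ => Real.exp (t ^ 2 * K * v k) := by
        filter_upwards with ω
        have := Real.add_one_le_exp (t ^ 2 * K * v k)
        linarith
  -- one step of the mgf recursion
  have hstep : ∀ k, ∫ ω, G (k + 1) ω ∂μ
      ≤ Real.exp (t ^ 2 * K * v k) * ∫ ω, G k ω ∂μ := by
    intro k
    set g : Ω → ℝ := fun ω => Real.exp (t * (X (k + 1) ω - X k ω)) with hgdef
    have hfg : (fun ω => G k ω * g ω) = G (k + 1) := by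
      funext ω
      rw [hGdef, hgdef]
      simp only
      rw [← Real.exp_add]
      congr 1
      ring
    have hgint : Integrable g μ := by
      refine Integrable.mono' (integrable_const (Real.exp (t * C)))
        ((Real.continuous_exp.comp_stronglyMeasurable
          (stronglyMeasurable_const.mul
            (((hX.stronglyMeasurable (k+1)).mono (ℱ.le (k+1))).sub
              ((hX.stronglyMeasurable k).mono (ℱ.le k))))).aestronglyMeasurable) ?_
      filter_upwards [hbdd k] with ω h
      rw [hgdef, Real.norm_eq_abs, Real.abs_exp]
      exact Real.exp_le_exp.2
        (mul_le_mul_of_nonneg_left ((le_abs_self _).trans h) ht.le)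
    have hGbound : ∀ᵐ ω ∂μ, ‖G k ω‖ ≤ Real.exp (t * (k * C)) := by
      filter_upwards [habs k] with ω h
      rw [hGdef, Real.norm_eq_abs, Real.abs_exp]
      exact Real.exp_le_exp.2
        (mul_le_mul_of_nonneg_left ((le_abs_self _).trans h) ht.le)
    have hprodint : Integrable (fun ω => G k ω * g ω) μ := by
      rw [hfg]; exact hGint (k + 1)
    have hpull : μ[fun ω => G k ω * g ω | ℱ k] =ᵐ[μ] fun ω => G k ω * (μ[g | ℱ k]) ω := by
      have := condExp_stronglyMeasurable_mul_of_bound (ℱ.le k) (hGsm k) hgint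
        (Real.exp (t * (k * C))) hGbound
      filter_upwards [this] with ω h
      exact h
    calc ∫ ω, G (k + 1) ω ∂μ = ∫ ω, G k ω * g ω ∂μ := by rw [hfg]
    _ = ∫ ω, (μ[fun ω' => G k ω' * g ω' | ℱ k]) ω ∂μ :=
        (integral_condExp (ℱ.le k)).symm
    _ = ∫ ω, G k ω * (μ[g | ℱ k]) ω ∂μ := integral_congr_ae hpull
    _ ≤ ∫ ω, G k ω * Real.exp (t ^ 2 * K * v k) ∂μ := by
        refine integral_mono_ae
          (integrable_condExp.bdd_mul
            ((hGsm k).mono (ℱ.le k)).aestronglyMeasurable hGbound)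
          ((hGint k).mul_const _) ?_
        filter_upwards [hcond k] with ω h
        exact mul_le_mul_of_nonneg_left h (Real.exp_pos _).le
    _ = Real.exp (t ^ 2 * K * v k) * ∫ ω, G k ω ∂μ := by
        rw [integral_mul_const]; ring
  -- mgf bound by induction
  have hmgf : ∀ k, ∫ ω, G k ω ∂μ ≤ Real.exp (t ^ 2 * K * ∑ i ∈ range k, v i) := by
    intro k
    induction k with
    | zero =>
      simp [hGdef]
    | succ k ih =>
      calc ∫ ω, G (k + 1) ω ∂μ ≤ Real.exp (t ^ 2 * K * v k) * ∫ ω, G k ω ∂μ := hstep k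
      _ ≤ Real.exp (t ^ 2 * K * v k) * Real.exp (t ^ 2 * K * ∑ i ∈ range k, v i) :=
          mul_le_mul_of_nonneg_left ih (Real.exp_pos _).le
      _ = Real.exp (t ^ 2 * K * ∑ i ∈ range (k + 1), v i) := by
          rw [← Real.exp_add, Finset.sum_range_succ]
          congr 1
          ring
  -- Chernoff bound
  have hsub : {ω | lam ≤ X n ω - X 0 ω} ⊆ {ω | Real.exp (t * lam) ≤ G n ω} := by
    intro ω h
    simp only [Set.mem_setOf_eq] at *
    exact Real.exp_le_exp.2 (mul_le_mul_of_nonneg_left h ht.le)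
  have hm := mul_meas_ge_le_integral_of_nonneg
    (Filter.Eventually.of_forall fun ω => (Real.exp_pos (t * (X n ω - X 0 ω))).le)
    (hGint n) (Real.exp (t * lam))
  have h1 : (μ {ω | lam ≤ X n ω - X 0 ω}).toReal
      ≤ (μ {ω | Real.exp (t * lam) ≤ G n ω}).toReal :=
    ENNReal.toReal_mono (measure_ne_top _ _) (measure_mono hsub)
  have h2 : (μ {ω | Real.exp (t * lam) ≤ G n ω}).toReal
      ≤ Real.exp (-(t * lam)) * Real.exp (t ^ 2 * K * σ2) := by
    have hpos : (0 : ℝ) < Real.exp (t * lam) := Real.exp_pos _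
    have hle : Real.exp (t * lam) * (μ {ω | Real.exp (t * lam) ≤ G n ω}).toReal
        ≤ Real.exp (t ^ 2 * K * σ2) := hm.trans (hσ ▸ hmgf n)
    rw [Real.exp_neg, ← div_eq_inv_mul]
    exact (le_div_iff₀' hpos).2 hle
  have h3 : (μ {ω | lam ≤ X n ω - X 0 ω}).toReal
      ≤ Real.exp (-(t * lam) + t ^ 2 * σ2 * K) := by
    rw [Real.exp_add]
    calc (μ {ω | lam ≤ X n ω - X 0 ω}).toReal
        ≤ Real.exp (-(t * lam)) * Real.exp (t ^ 2 * K * σ2) := h1.trans h2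
    _ = Real.exp (-(t * lam)) * Real.exp (t ^ 2 * σ2 * K) := by ring_nf
  calc μ {ω | lam ≤ X n ω - X 0 ω}
      = ENNReal.ofReal (μ {ω | lam ≤ X n ω - X 0 ω}).toReal :=
        (ENNReal.ofReal_toReal (measure_ne_top _ _)).symm
  _ ≤ ENNReal.ofReal (Real.exp (-(t * lam) + t ^ 2 * σ2 * K)) :=
      ENNReal.ofReal_le_ofReal h3

/-- Freedman / Bernstein-type martingale inequality: for a martingale with
`C`-bounded differences and variance parameter `σ²`,
`P(|Xₙ - X₀| ≥ λ) ≤ 2 exp(-λ²/(2(σ² + Cλ/3)))`. -/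
theorem stmt10 {Ω : Type*} {m0 : MeasurableSpace Ω} (μ : Measure Ω)
    [IsProbabilityMeasure μ] (ℱ : Filtration ℕ m0) (X : ℕ → Ω → ℝ)
    (hX : Martingale X ℱ μ) (n : ℕ) (C : ℝ) (hC : 0 < C)
    (hbdd : ∀ i, ∀ᵐ ω ∂μ, |X (i + 1) ω - X i ω| ≤ C)
    (v : ℕ → ℝ)
    (hv : ∀ i, ∀ᵐ ω ∂μ, (μ[fun ω' => (X (i + 1) ω' - X i ω') ^ 2 | ℱ i]) ω ≤ v i)
    (σ2 : ℝ) (hσ : σ2 = ∑ i ∈ Finset.range n, v i)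
    (lam : ℝ) (hlam : 0 < lam) :
    (μ {ω | lam ≤ |X n ω - X 0 ω|}).toReal
      ≤ 2 * Real.exp (-lam ^ 2 / (2 * (σ2 + C * lam / 3))) := by
  have hae : (MeasureTheory.ae μ).NeBot := ae_neBot.2 (IsProbabilityMeasure.ne_zero μ)
  -- each v i is nonnegative
  have hv0 : ∀ i, 0 ≤ v i := by
    intro i
    have hnn : (0 : Ω → ℝ) ≤ᵐ[μ]
        μ[fun ω' => (X (i + 1) ω' - X i ω') ^ 2 | ℱ i] :=
      condExp_nonneg (Filter.Eventually.of_forall fun ω => sq_nonneg _)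
    obtain ⟨ω, h1, h2⟩ := ((hv i).and hnn).exists
    exact le_trans h2 h1
  have hσ0 : 0 ≤ σ2 := hσ ▸ Finset.sum_nonneg fun i _ => hv0 i
  -- hypotheses for the negated martingale
  have hXneg : Martingale (-X) ℱ μ := hX.neg
  have hbddneg : ∀ i, ∀ᵐ ω ∂μ, |(-X) (i + 1) ω - (-X) i ω| ≤ C := by
    intro i
    filter_upwards [hbdd i] with ω h
    have he : (-X) (i + 1) ω - (-X) i ω = -(X (i + 1) ω - X i ω) := by
      simp only [Pi.neg_apply]; ring
    rw [he, abs_neg]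
    exact h
  have hvneg : ∀ i, ∀ᵐ ω ∂μ,
      (μ[fun ω' => ((-X) (i + 1) ω' - (-X) i ω') ^ 2 | ℱ i]) ω ≤ v i := by
    intro i
    have he : (fun ω' => ((-X) (i + 1) ω' - (-X) i ω') ^ 2)
        = fun ω' => (X (i + 1) ω' - X i ω') ^ 2 := by
      funext ω'; simp only [Pi.neg_apply]; ring
    rw [he]
    exact hv i
  -- choose the Chernoff parameter
  obtain ⟨t, ht, htC, hexp⟩ : ∃ t : ℝ, 0 < t ∧ t * C < 3 ∧
      -(t * lam) + t ^ 2 * σ2 * (1 / (2 * (1 - t * C / 3)))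
        = -lam ^ 2 / (2 * (σ2 + C * lam / 3)) := by
    rcases eq_or_lt_of_le hσ0 with hz | hpos
    · refine ⟨3 / (2 * C), by positivity, by
        rw [div_mul_eq_mul_div, div_lt_iff₀ (by positivity : (0:ℝ) < 2 * C)]
        nlinarith, ?_⟩
      rw [← hz]
      field_simp
      ring
    · set s : ℝ := σ2 + C * lam / 3 with hs
      have hs0 : 0 < s := by positivity
      refine ⟨lam / s, by positivity, ?_, ?_⟩
      · rw [div_mul_eq_mul_div, div_lt_iff₀ hs0]
        rw [hs]; nlinarith
      · have hden : 1 - lam / s * C / 3 = σ2 / s := by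
          field_simp
          rw [hs]; ring
        rw [hden]
        field_simp
        ring
  -- one-sided bounds
  have hA := one_sided μ ℱ X hX n C hC hbdd v hv σ2 hσ lam t hlam ht htC
  have hB := one_sided μ ℱ (-X) hXneg n C hC hbddneg v hvneg σ2 hσ lam t hlam ht htC
  rw [hexp] at hA hB
  set e : ℝ := Real.exp (-lam ^ 2 / (2 * (σ2 + C * lam / 3))) with hedef
  -- union bound
  have hsub : {ω | lam ≤ |X n ω - X 0 ω|}
      ⊆ {ω | lam ≤ X n ω - X 0 ω} ∪ {ω | lam ≤ (-X) n ω - (-X) 0 ω} := by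
    intro ω h
    simp only [Set.mem_setOf_eq, Set.mem_union, Pi.neg_apply] at *
    rcases le_abs.1 h with h' | h'
    · exact Or.inl h'
    · right; linarith
  have hle : μ {ω | lam ≤ |X n ω - X 0 ω|}
      ≤ ENNReal.ofReal e + ENNReal.ofReal e := by
    calc μ {ω | lam ≤ |X n ω - X 0 ω|}
        ≤ μ ({ω | lam ≤ X n ω - X 0 ω} ∪ {ω | lam ≤ (-X) n ω - (-X) 0 ω}) :=
          measure_mono hsub
    _ ≤ μ {ω | lam ≤ X n ω - X 0 ω} + μ {ω | lam ≤ (-X) n ω - (-X) 0 ω} :=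
          measure_union_le _ _
    _ ≤ ENNReal.ofReal e + ENNReal.ofReal e := add_le_add hA hB
  have hfin : ENNReal.ofReal e + ENNReal.ofReal e ≠ ⊤ := by
    simp [ENNReal.add_ne_top]
  calc (μ {ω | lam ≤ |X n ω - X 0 ω|}).toReal
      ≤ (ENNReal.ofReal e + ENNReal.ofReal e).toReal := ENNReal.toReal_mono hfin hle
  _ = e + e := by
      rw [ENNReal.toReal_add ENNReal.ofReal_ne_top ENNReal.ofReal_ne_top,
        ENNReal.toReal_ofReal (Real.exp_pos _).le]
  _ = 2 * e := by ring
end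

section
/- Let H be a t-regular hypergraph on n vertices and m edges, and suppose every edge of H has size at most s. Then adding to each vertex's color an arbitrary reassignment via the Beck–Fiala argument shows disc(H) ≤ 2t − 1. Formally: for every t-regular hypergraph H (every vertex in exactly t edges), there exists χ : V → {−1, 1} with |Σ_{v∈e} χ(v)| ≤ 2t − 1 for every edge e. -/
open Finset

private lemma bf_kernel {α β : Type*} [Fintype α] [Fintype β] [DecidableEq α]
    (M : Matrix β α ℝ) (h : Fintype.card β < Fintype.card α) :
    ∃ w : α → ℝ, w ≠ 0 ∧ M.mulVec w = 0 := by
  by_contra hc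
  push_neg at hc
  have hinj : Function.Injective M.mulVecLin := by
    rw [← LinearMap.ker_eq_bot, LinearMap.ker_eq_bot']
    intro w hw
    by_contra hw0
    exact hc w hw0 (by simpa using hw)
  have h2 := LinearMap.finrank_le_finrank_of_injective hinj
  simp only [Module.finrank_pi] at h2
  omega

private lemma bf_count {n m : ℕ} (E : Fin m → Finset (Fin n)) (p : Fin n → Prop)
    [DecidablePred p] :
    ∑ e : Fin m, ((E e).filter p).card
      = ∑ v ∈ univ.filter p, (univ.filter fun e => v ∈ E e).card := by
  have h1 : ∀ e, ((E e).filter p).card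
      = ∑ v ∈ univ.filter p, if v ∈ E e then 1 else 0 := by
    intro e
    rw [← Finset.card_filter]
    congr 1
    ext v
    simp [Finset.mem_filter, and_comm]
  simp only [h1]
  rw [Finset.sum_comm]
  refine Finset.sum_congr rfl fun v _ => ?_
  rw [Finset.card_filter]

private lemma bf_direct {n t : ℕ} (ht : 0 < t) (s : Finset (Fin n))
    (x χ : Fin n → ℝ) (hχ : ∀ v, χ v = 1 ∨ χ v = -1)
    (hfix : ∀ v, |x v| = 1 → χ v = x v)
    (hx1 : ∀ v, |x v| ≤ 1)
    (hcard : (s.filter (fun v => |x v| < 1)).card ≤ t)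
    (hsum : ∑ v ∈ s, x v = 0) :
    |∑ v ∈ s, χ v| < 2 * t := by
  have habs : ∀ v, |χ v| = 1 := by
    intro v; rcases hχ v with h | h <;> simp [h]
  have hsplit : ∑ v ∈ s, χ v = ∑ v ∈ s.filter (fun v => |x v| < 1), (χ v - x v) := by
    have h0 : ∑ v ∈ s, (χ v - x v) = ∑ v ∈ s, χ v - ∑ v ∈ s, x v := Finset.sum_sub_distrib _ _
    rw [Finset.sum_filter_of_ne, h0, hsum, sub_zero]
    intro v hv hne
    rcases lt_or_eq_of_le (hx1 v) with h | h
    · exact h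
    · exact absurd (hfix v h) (by simpa [sub_eq_zero] using hne)
  rcases Finset.eq_empty_or_nonempty (s.filter (fun v => |x v| < 1)) with hemp | hne
  · rw [hsplit, hemp, Finset.sum_empty, abs_zero]
    positivity
  · calc |∑ v ∈ s, χ v| ≤ ∑ v ∈ s.filter (fun v => |x v| < 1), |χ v - x v| := by
          rw [hsplit]; exact Finset.abs_sum_le_sum_abs _ _
    _ < ∑ v ∈ s.filter (fun v => |x v| < 1), 2 := by
          refine Finset.sum_lt_sum_of_nonempty hne fun v hv => ?_
          have hvf : |x v| < 1 := (Finset.mem_filter.mp hv).2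
          calc |χ v - x v| ≤ |χ v| + |x v| := abs_sub _ _
          _ < 2 := by rw [habs v]; linarith
    _ = 2 * (s.filter (fun v => |x v| < 1)).card := by
          rw [Finset.sum_const, nsmul_eq_mul]; ring
    _ ≤ 2 * t := by
          have : ((s.filter (fun v => |x v| < 1)).card : ℝ) ≤ (t : ℝ) := by exact_mod_cast hcard
          linarith

private lemma bf_key {n m t : ℕ} (ht : 0 < t) (E : Fin m → Finset (Fin n))
    (hreg : ∀ v : Fin n, (univ.filter (fun e => v ∈ E e)).card = t) :
    ∀ k : ℕ, ∀ x : Fin n → ℝ,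
      (univ.filter (fun v => |x v| < 1)).card = k →
      (∀ v, |x v| ≤ 1) →
      (∀ e, t < ((E e).filter (fun v => |x v| < 1)).card → ∑ v ∈ E e, x v = 0) →
      ∃ χ : Fin n → ℝ, (∀ v, χ v = 1 ∨ χ v = -1) ∧
        (∀ v, |x v| = 1 → χ v = x v) ∧
        ∀ e, (∑ v ∈ E e, x v = 0) → |∑ v ∈ E e, χ v| < 2 * t := by
  intro k
  induction k using Nat.strong_induction_on with
  | _ k IH =>
  intro x hk hx1 hx2
  rcases Finset.eq_empty_or_nonempty (univ.filter (fun v => |x v| < 1)) with hF | hFne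
  · -- all vertices fixed: take χ = x
    have hfix : ∀ v, |x v| = 1 := by
      intro v
      rcases lt_or_eq_of_le (hx1 v) with h | h
      · exfalso
        have hv : v ∈ univ.filter (fun u => |x u| < 1) :=
          Finset.mem_filter.mpr ⟨Finset.mem_univ v, h⟩
        rw [hF] at hv
        exact absurd hv (Finset.notMem_empty v)
      · exact h
    refine ⟨x, ?_, fun v _ => rfl, ?_⟩
    · intro v
      rcases (abs_eq (by norm_num : (0:ℝ) ≤ 1)).mp (hfix v) with h | h
      · exact Or.inl h
      · exact Or.inr h
    · intro e he
      rw [he, abs_zero]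
      positivity
  · -- inductive step
    set F := univ.filter (fun v => |x v| < 1) with hFdef
    set A := univ.filter (fun e : Fin m => t < ((E e).filter (fun v => |x v| < 1)).card)
      with hAdef
    have hcount : A.card * (t + 1) ≤ F.card * t := by
      calc A.card * (t + 1) = ∑ _e ∈ A, (t + 1) := by
            rw [Finset.sum_const, smul_eq_mul, mul_comm]
      _ ≤ ∑ e ∈ A, ((E e).filter (fun v => |x v| < 1)).card := by
            refine Finset.sum_le_sum fun e he => ?_
            have := (Finset.mem_filter.mp he).2
            omega
      _ ≤ ∑ e : Fin m, ((E e).filter (fun v => |x v| < 1)).card :=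
            Finset.sum_le_sum_of_subset (Finset.subset_univ A)
      _ = ∑ v ∈ F, (univ.filter fun e => v ∈ E e).card := bf_count E _
      _ = ∑ _v ∈ F, t := Finset.sum_congr rfl fun v _ => hreg v
      _ = F.card * t := by rw [Finset.sum_const, smul_eq_mul]
    have hAF : A.card < F.card := by
      have hFpos : 0 < F.card := Finset.card_pos.mpr hFne
      by_contra hc
      push_neg at hc
      have h3 : F.card * (t + 1) ≤ A.card * (t + 1) := Nat.mul_le_mul hc (le_refl (t + 1))
      nlinarith
    have hcards : Fintype.card ↥A < Fintype.card ↥F := by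
      simpa [Fintype.card_coe] using hAF
    obtain ⟨w, hw0, hwker⟩ :=
      bf_kernel (fun (e : ↥A) (v : ↥F) => if (v : Fin n) ∈ E (e : Fin m) then (1:ℝ) else 0)
        hcards
    classical
    set z : Fin n → ℝ := fun v => if h : v ∈ F then w ⟨v, h⟩ else 0 with hzdef
    have hzsupp : ∀ v, z v ≠ 0 → v ∈ F := by
      intro v h
      by_contra hc
      simp [hzdef, hc] at h
    have hzF : ∀ v (h : v ∈ F), z v = w ⟨v, h⟩ := by
      intro v h; simp [hzdef, h]
    have hzsum : ∀ e ∈ A, ∑ v ∈ E e, z v = 0 := by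
      intro e he
      have h0 := congrFun hwker ⟨e, he⟩
      have h1 : ∑ v : ↥F, (if (v : Fin n) ∈ E e then (1:ℝ) else 0) * w v = 0 := by
        simpa [Matrix.mulVec, dotProduct] using h0
      have h2 : ∑ v ∈ E e, z v = ∑ v ∈ univ, (if v ∈ E e then z v else 0) := by
        rw [Finset.sum_ite_mem, Finset.univ_inter]
      have h3 : ∑ v ∈ univ, (if v ∈ E e then z v else 0)
          = ∑ v ∈ F, (if v ∈ E e then z v else 0) := by
        symm
        refine Finset.sum_subset (Finset.subset_univ F) fun v _ hv => ?_
        simp [hzdef, hv]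
      have h4 : ∑ v ∈ F, (if v ∈ E e then z v else 0)
          = ∑ v : ↥F, (if (v : Fin n) ∈ E e then (1:ℝ) else 0) * w v := by
        rw [← Finset.sum_coe_sort F]
        refine Finset.sum_congr rfl fun v _ => ?_
        rw [hzF v v.2]
        by_cases hv : (v : Fin n) ∈ E e <;> simp [hv]
      rw [h2, h3, h4, h1]
    -- line search
    set S := univ.filter (fun v => z v ≠ 0) with hSdef
    have hSne : S.Nonempty := by
      obtain ⟨v, hv⟩ := Function.ne_iff.mp hw0
      exact ⟨(v : Fin n), Finset.mem_filter.mpr ⟨Finset.mem_univ _, by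
        rw [hzF v v.2]
        simpa using hv⟩⟩
    have hSfloat : ∀ v ∈ S, |x v| < 1 := by
      intro v hv
      have := hzsupp v (Finset.mem_filter.mp hv).2
      exact (Finset.mem_filter.mp this).2
    set cv : Fin n → ℝ := fun v => if 0 < z v then (1 - x v) / z v else (-1 - x v) / z v
      with hcvdef
    obtain ⟨v0, hv0S, hv0min⟩ := S.exists_min_image cv hSne
    set c := cv v0 with hcdef
    have hcvpos : ∀ v ∈ S, 0 < cv v := by
      intro v hv
      have hvz : z v ≠ 0 := (Finset.mem_filter.mp hv).2
      have hvf := abs_lt.mp (hSfloat v hv)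
      rcases lt_or_gt_of_ne hvz with hneg | hpos
      · have hcv : cv v = (-1 - x v) / z v := if_neg (by linarith)
        rw [hcv]
        exact div_pos_iff.mpr (Or.inr ⟨by linarith, hneg⟩)
      · have hcv : cv v = (1 - x v) / z v := if_pos hpos
        rw [hcv]
        exact div_pos_iff.mpr (Or.inl ⟨by linarith, hpos⟩)
    have hcpos : 0 < c := hcvpos v0 hv0S
    set x' : Fin n → ℝ := fun v => x v + c * z v with hx'def
    have hzero : ∀ v, z v = 0 → x' v = x v := by
      intro v h
      simp [hx'def, h]
    have hx'le : ∀ v, |x' v| ≤ 1 := by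
      intro v
      by_cases hvz : z v = 0
      · rw [hzero v hvz]; exact hx1 v
      · have hvS : v ∈ S := Finset.mem_filter.mpr ⟨Finset.mem_univ _, hvz⟩
        have hvf := abs_lt.mp (hSfloat v hvS)
        have hcle : c ≤ cv v := hv0min v hvS
        rw [abs_le]
        rcases lt_or_gt_of_ne hvz with hneg | hpos
        · have hcv : cv v = (-1 - x v) / z v := if_neg (by linarith)
          constructor
          · have h1 : cv v * z v ≤ c * z v := mul_le_mul_of_nonpos_right hcle (le_of_lt hneg)
            have h2 : cv v * z v = -1 - x v := by
              rw [hcv]; field_simp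
            simp only [hx'def]
            linarith
          · have : c * z v < 0 := mul_neg_of_pos_of_neg hcpos hneg
            simp only [hx'def]
            linarith
        · have hcv : cv v = (1 - x v) / z v := if_pos hpos
          constructor
          · have : 0 < c * z v := mul_pos hcpos hpos
            simp only [hx'def]
            linarith
          · have h1 : c * z v ≤ cv v * z v := mul_le_mul_of_nonneg_right hcle (le_of_lt hpos)
            have h2 : cv v * z v = 1 - x v := by
              rw [hcv]; field_simp
            simp only [hx'def]
            linarith
    have hv0fix : |x' v0| = 1 := by
      have hvz : z v0 ≠ 0 := (Finset.mem_filter.mp hv0S).2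
      rcases lt_or_gt_of_ne hvz with hneg | hpos
      · have hcv : c = (-1 - x v0) / z v0 := by
          rw [hcdef, hcvdef]; exact if_neg (by linarith)
        have : x' v0 = -1 := by
          simp only [hx'def, hcv]
          field_simp
          ring
        rw [this]; norm_num
      · have hcv : c = (1 - x v0) / z v0 := by
          rw [hcdef, hcvdef]; exact if_pos hpos
        have : x' v0 = 1 := by
          simp only [hx'def, hcv]
          field_simp
          ring
        rw [this]; norm_num
    have hfixkeep : ∀ v, |x v| = 1 → x' v = x v := by
      intro v h
      refine hzero v ?_
      by_contra hc
      have := hSfloat v (Finset.mem_filter.mpr ⟨Finset.mem_univ _, hc⟩)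
      linarith [this, h.ge]
    have hmono : ∀ v, |x' v| < 1 → |x v| < 1 := by
      intro v h
      rcases lt_or_eq_of_le (hx1 v) with h1 | h1
      · exact h1
      · rw [hfixkeep v h1] at h
        linarith
    have hss : (univ.filter (fun v => |x' v| < 1)) ⊂ F := by
      rw [Finset.ssubset_iff_of_subset]
      · refine ⟨v0, ?_, ?_⟩
        · exact Finset.mem_filter.mpr ⟨Finset.mem_univ _, hSfloat v0 hv0S⟩
        · intro hc
          have := (Finset.mem_filter.mp hc).2
          linarith [hv0fix]
      · intro v hv
        exact Finset.mem_filter.mpr ⟨Finset.mem_univ _, hmono v (Finset.mem_filter.mp hv).2⟩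
    have hlt : (univ.filter (fun v => |x' v| < 1)).card < k := by
      rw [← hk]
      exact Finset.card_lt_card hss
    have hx'2 : ∀ e, t < ((E e).filter (fun v => |x' v| < 1)).card → ∑ v ∈ E e, x' v = 0 := by
      intro e he
      have hsub : (E e).filter (fun v => |x' v| < 1) ⊆ (E e).filter (fun v => |x v| < 1) :=
        Finset.monotone_filter_right _ (fun v _ hv => hmono v hv)
      have heA : e ∈ A := Finset.mem_filter.mpr ⟨Finset.mem_univ _,
        lt_of_lt_of_le he (Finset.card_le_card hsub)⟩
      have h1 : ∑ v ∈ E e, x' v = ∑ v ∈ E e, x v + c * ∑ v ∈ E e, z v := by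
        simp only [hx'def]
        rw [Finset.sum_add_distrib, Finset.mul_sum]
      rw [h1, hx2 e (lt_of_lt_of_le he (Finset.card_le_card hsub)), hzsum e heA]
      ring
    obtain ⟨χ, hχ1, hχ2, hχ3⟩ := IH _ hlt x' rfl hx'le hx'2
    have hfixall : ∀ v, |x v| = 1 → χ v = x v := by
      intro v hv
      have h' := hfixkeep v hv
      have hv' : |x' v| = 1 := by rw [h']; exact hv
      exact (hχ2 v hv').trans h'
    refine ⟨χ, hχ1, hfixall, ?_⟩
    · intro e he
      by_cases hEe : t < ((E e).filter (fun v => |x v| < 1)).card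
      · have heA : e ∈ A := Finset.mem_filter.mpr ⟨Finset.mem_univ _, hEe⟩
        refine hχ3 e ?_
        have h1 : ∑ v ∈ E e, x' v = ∑ v ∈ E e, x v + c * ∑ v ∈ E e, z v := by
          simp only [hx'def]
          rw [Finset.sum_add_distrib, Finset.mul_sum]
        rw [h1, he, hzsum e heA]
        ring
      · push_neg at hEe
        exact bf_direct ht (E e) x χ hχ1 hfixall hx1 hEe he

/-- Beck–Fiala theorem: every `t`-regular hypergraph admits a `±1` coloring in
which every edge has discrepancy at most `2t - 1`. -/
theorem stmt18 (n m t : ℕ) (ht : 0 < t) (E : Fin m → Finset (Fin n))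
    (hreg : ∀ v : Fin n, (Finset.univ.filter (fun e => v ∈ E e)).card = t) :
    ∃ χ : Fin n → ℤ, (∀ v, χ v = 1 ∨ χ v = -1) ∧
      ∀ e : Fin m, |∑ v ∈ E e, χ v| ≤ 2 * (t : ℤ) - 1 := by
  obtain ⟨χ, hχ1, _, hχ3⟩ := bf_key ht E hreg _ (fun _ => 0) rfl
    (fun v => by norm_num) (fun e _ => by simp)
  set ψ : Fin n → ℤ := fun v => if χ v = 1 then 1 else -1 with hψ
  refine ⟨ψ, ?_, ?_⟩
  · intro v
    by_cases h : χ v = 1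
    · exact Or.inl (by simp [hψ, h])
    · exact Or.inr (by simp [hψ, h])
  · intro e
    have hlt : |∑ v ∈ E e, χ v| < 2 * t := hχ3 e (by simp)
    have hsum : ((∑ v ∈ E e, ψ v : ℤ) : ℝ) = ∑ v ∈ E e, χ v := by
      push_cast
      refine Finset.sum_congr rfl fun v _ => ?_
      rcases hχ1 v with h | h <;> norm_num [hψ, h]
    have h3 : |∑ v ∈ E e, ψ v| < 2 * (t : ℤ) := by
      have h4 : |((∑ v ∈ E e, ψ v : ℤ) : ℝ)| < 2 * t := by rw [hsum]; exact hlt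
      rw [← Int.cast_abs] at h4
      exact_mod_cast h4
    omega
end
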